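/- arXiv:2012.05264 — 2 statements merged into one kernel-verified Lean document; each statement's English description precedes it below -/
import Mathlib

section
/- (Main a priori error estimate, discrete form.) Let Z = [ζ_1,…,ζ_R] ∈ ℝ^{N×R} have orthonormal columns, w, ŵ ∈ ℝ^N nonnegative vectors with ∑ w_i = |Ω| and ∑ ŵ_i ≤ |Ω|, and suppose: (i) |⟨w − ŵ, ζ_n⟩| ≤ ε₁ for n = 1,…,R; (ii) the snapshot φ ∈ ℝ^N satisfies ‖φ − Z Zᵀ φ‖₂ ≤ σ (SVD truncation bound); (iii) ∑_{n=1}^R |⟨φ, ζ_n⟩| ≤ S_f. Then |⟨w, φ⟩ − ⟨ŵ, φ⟩| ≤ (‖w‖₂ + ‖ŵ‖₂) σ + ε₁ S_f. -/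
theorem stmt_13 (N R : ℕ) (ζ : Fin R → Fin N → ℝ)
    (hζ : ∀ n m, ∑ i, ζ n i * ζ m i = if n = m then (1 : ℝ) else 0)
    (w w' : Fin N → ℝ) (Ω : ℝ)
    (hw : ∀ i, 0 ≤ w i) (hw' : ∀ i, 0 ≤ w' i)
    (hwsum : ∑ i, w i = Ω) (hw'sum : ∑ i, w' i ≤ Ω)
    (ε₁ σ S_f : ℝ) (hε₁ : 0 ≤ ε₁)
    (φ : Fin N → ℝ)
    (hconstr : ∀ n, |∑ i, (w i - w' i) * ζ n i| ≤ ε₁)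
    (hproj : Real.sqrt (∑ i, (φ i - ∑ n, (∑ j, φ j * ζ n j) * ζ n i) ^ 2) ≤ σ)
    (hSf : ∑ n, |∑ j, φ j * ζ n j| ≤ S_f) :
    |∑ i, w i * φ i - ∑ i, w' i * φ i| ≤
      (Real.sqrt (∑ i, w i ^ 2) + Real.sqrt (∑ i, w' i ^ 2)) * σ + ε₁ * S_f := by
  set c : Fin R → ℝ := fun n => ∑ j, φ j * ζ n j with hc
  set r : Fin N → ℝ := fun i => φ i - ∑ n, c n * ζ n i with hr
  -- Cauchy-Schwarz with absolute value
  have CS : ∀ v : Fin N → ℝ, |∑ i, v i * r i| ≤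
      Real.sqrt (∑ i, v i ^ 2) * Real.sqrt (∑ i, r i ^ 2) := by
    intro v
    have h1 : |∑ i, v i * r i| ≤ ∑ i, |v i| * |r i| := by
      calc |∑ i, v i * r i| ≤ ∑ i, |v i * r i| := Finset.abs_sum_le_sum_abs _ _
        _ = ∑ i, |v i| * |r i| := by simp [abs_mul]
    have h2 := Real.sum_mul_le_sqrt_mul_sqrt Finset.univ (fun i => |v i|) (fun i => |r i|)
    simp only [sq_abs] at h2
    exact h1.trans h2
  have hrle : Real.sqrt (∑ i, r i ^ 2) ≤ σ := hproj
  -- decomposition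
  have hdecomp : ∑ i, w i * φ i - ∑ i, w' i * φ i
      = ∑ i, (w i - w' i) * r i + ∑ n, c n * ∑ i, (w i - w' i) * ζ n i := by
    have e1 : ∑ i, w i * φ i - ∑ i, w' i * φ i = ∑ i, (w i - w' i) * φ i := by
      rw [← Finset.sum_sub_distrib]; exact Finset.sum_congr rfl fun i _ => by ring
    have e2 : ∀ i, (w i - w' i) * φ i
        = (w i - w' i) * r i + ∑ n, (w i - w' i) * (c n * ζ n i) := by
      intro i
      simp only [hr, mul_sub, Finset.mul_sum]
      ring
    rw [e1, Finset.sum_congr rfl fun i _ => e2 i, Finset.sum_add_distrib, Finset.sum_comm]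
    congr 1
    exact Finset.sum_congr rfl fun n _ => by
      rw [Finset.mul_sum]; exact Finset.sum_congr rfl fun i _ => by ring
  rw [hdecomp]
  have h1 : |∑ i, (w i - w' i) * r i| ≤
      (Real.sqrt (∑ i, w i ^ 2) + Real.sqrt (∑ i, w' i ^ 2)) * σ := by
    have hsplit : ∑ i, (w i - w' i) * r i = ∑ i, w i * r i - ∑ i, w' i * r i := by
      rw [← Finset.sum_sub_distrib]; exact Finset.sum_congr rfl fun i _ => by ring
    have hw0 : 0 ≤ Real.sqrt (∑ i, w i ^ 2) := Real.sqrt_nonneg _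
    have hw'0 : 0 ≤ Real.sqrt (∑ i, w' i ^ 2) := Real.sqrt_nonneg _
    have hr0 : 0 ≤ Real.sqrt (∑ i, r i ^ 2) := Real.sqrt_nonneg _
    calc |∑ i, (w i - w' i) * r i|
        ≤ |∑ i, w i * r i| + |∑ i, w' i * r i| := by
          rw [hsplit]; exact abs_sub _ _
      _ ≤ Real.sqrt (∑ i, w i ^ 2) * Real.sqrt (∑ i, r i ^ 2)
          + Real.sqrt (∑ i, w' i ^ 2) * Real.sqrt (∑ i, r i ^ 2) :=
          add_le_add (CS w) (CS w')
      _ ≤ (Real.sqrt (∑ i, w i ^ 2) + Real.sqrt (∑ i, w' i ^ 2)) * σ := by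
          nlinarith
  have h2 : |∑ n, c n * ∑ i, (w i - w' i) * ζ n i| ≤ ε₁ * S_f := by
    calc |∑ n, c n * ∑ i, (w i - w' i) * ζ n i|
        ≤ ∑ n, |c n * ∑ i, (w i - w' i) * ζ n i| := Finset.abs_sum_le_sum_abs _ _
      _ ≤ ∑ n, |c n| * ε₁ := by
          apply Finset.sum_le_sum
          intro n _
          rw [abs_mul]
          exact mul_le_mul_of_nonneg_left (hconstr n) (abs_nonneg _)
      _ = ε₁ * ∑ n, |c n| := by rw [← Finset.sum_mul]; ring
      _ ≤ ε₁ * S_f := mul_le_mul_of_nonneg_left hSf hε₁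
  calc |∑ i, (w i - w' i) * r i + ∑ n, c n * ∑ i, (w i - w' i) * ζ n i|
      ≤ |∑ i, (w i - w' i) * r i| + |∑ n, c n * ∑ i, (w i - w' i) * ζ n i| :=
        abs_add_le _ _
    _ ≤ (Real.sqrt (∑ i, w i ^ 2) + Real.sqrt (∑ i, w' i ^ 2)) * σ + ε₁ * S_f :=
        add_le_add h1 h2
end

section
/- (Theorem 1.) Under the hypotheses: f_k(·;μ) are functions on the N full quadrature nodes for k ∈ K and μ ∈ D ⊆ ℝ^p; each f_k is L_f-Lipschitz in μ with respect to the sup norm over nodes; training parameters μ_1,…,μ_M fill D up to Δ = max_{μ∈D} min_m ‖μ − μ_m‖₂; the sparse weights ŵ (nonnegative, ∑ ŵ_i ≤ |Ω|) satisfy |⟨w − ŵ, ζ_n⟩| ≤ ε₁ for all R SVD modes ζ_n (orthonormal in ℝ^N); every snapshot φ_{k,m} = f_k(·;μ_m) satisfies ‖φ_{k,m} − proj φ_{k,m}‖₂² summed over all k, m is ≤ E (truncated SVD tail energy); and S_f = max_{k,m} ∑_{n=1}^R |⟨φ_{k,m}, ζ_n⟩|. Then for every μ ∈ D, max_k |⟨w,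 f_k(·;μ)⟩ − ⟨ŵ, f_k(·;μ)⟩| ≤ (‖w‖₂ + ‖ŵ‖₂)√E + ε₁ S_f + 2|Ω| L_f Δ. -/
theorem stmt_14 (N K M R P : ℕ) (D : Set (Fin P → ℝ))
    (f : Fin K → (Fin P → ℝ) → (Fin N → ℝ))
    (μs : Fin M → (Fin P → ℝ)) (hμs : ∀ m, μs m ∈ D)
    (L_f Ω Δ ε₁ E S_f : ℝ)
    (hL : 0 ≤ L_f) (hΩ : 0 < Ω) (hε₁ : 0 ≤ ε₁) (hE : 0 ≤ E)
    (hLip : ∀ k, ∀ μ ∈ D, ∀ μ' ∈ D, ∀ i,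
      |f k μ i - f k μ' i| ≤ L_f * Real.sqrt (∑ j, (μ j - μ' j) ^ 2))
    (hΔ : ∀ μ ∈ D, ∃ m : Fin M, Real.sqrt (∑ j, (μ j - μs m j) ^ 2) ≤ Δ)
    (ζ : Fin R → Fin N → ℝ)
    (hζ : ∀ n m, ∑ i, ζ n i * ζ m i = if n = m then (1 : ℝ) else 0)
    (w w' : Fin N → ℝ)
    (hw : ∀ i, 0 ≤ w i) (hw' : ∀ i, 0 ≤ w' i)
    (hwsum : ∑ i, w i = Ω) (hw'sum : ∑ i, w' i ≤ Ω)
    (hconstr : ∀ n, |∑ i, (w i - w' i) * ζ n i| ≤ ε₁)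
    (htail : ∑ k, ∑ m,
        (∑ i, (f k (μs m) i - ∑ n, (∑ j, f k (μs m) j * ζ n j) * ζ n i) ^ 2) ≤ E)
    (hSf : ∀ k m, ∑ n, |∑ j, f k (μs m) j * ζ n j| ≤ S_f) :
    ∀ μ ∈ D, ∀ k : Fin K,
      |∑ i, w i * f k μ i - ∑ i, w' i * f k μ i| ≤
        (Real.sqrt (∑ i, w i ^ 2) + Real.sqrt (∑ i, w' i ^ 2)) * Real.sqrt E +
          ε₁ * S_f + 2 * Ω * L_f * Δ := by
  intro μ hμ k
  obtain ⟨m, hm⟩ := hΔ μ hμ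
  have hΔ0 : 0 ≤ Δ := (Real.sqrt_nonneg _).trans hm
  set φ : Fin N → ℝ := f k (μs m) with hφ
  set c : Fin R → ℝ := fun n => ∑ j, φ j * ζ n j with hc
  set r : Fin N → ℝ := fun i => φ i - ∑ n, c n * ζ n i with hrdef
  -- decomposition
  have hswap : ∑ n, c n * (∑ i, (w i - w' i) * ζ n i)
      = ∑ i, (w i - w' i) * (∑ n, c n * ζ n i) := by
    simp only [Finset.mul_sum]
    rw [Finset.sum_comm]
    refine Finset.sum_congr rfl fun i _ => Finset.sum_congr rfl fun n _ => by ring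
  have hdecomp : ∑ i, w i * f k μ i - ∑ i, w' i * f k μ i
      = (∑ i, (w i - w' i) * (f k μ i - φ i))
      + (∑ i, (w i - w' i) * r i)
      + (∑ n, c n * (∑ i, (w i - w' i) * ζ n i)) := by
    rw [hswap, ← Finset.sum_add_distrib, ← Finset.sum_add_distrib,
      ← Finset.sum_sub_distrib]
    refine Finset.sum_congr rfl fun i _ => by simp only [hrdef]; ring
  -- A: Lipschitz term
  have hA : |∑ i, (w i - w' i) * (f k μ i - φ i)| ≤ 2 * Ω * L_f * Δ := by
    calc |∑ i, (w i - w' i) * (f k μ i - φ i)|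
        ≤ ∑ i, |(w i - w' i) * (f k μ i - φ i)| := Finset.abs_sum_le_sum_abs _ _
      _ = ∑ i, |w i - w' i| * |f k μ i - φ i| := by simp [abs_mul]
      _ ≤ ∑ i, (w i + w' i) * (L_f * Δ) := by
          refine Finset.sum_le_sum fun i _ => ?_
          have h1 : |w i - w' i| ≤ w i + w' i :=
            abs_le.mpr ⟨by linarith [hw i, hw' i], by linarith [hw i, hw' i]⟩
          have h2 : |f k μ i - φ i| ≤ L_f * Δ :=
            (hLip k μ hμ (μs m) (hμs m) i).trans (mul_le_mul_of_nonneg_left hm hL)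
          exact mul_le_mul h1 h2 (abs_nonneg _) (add_nonneg (hw i) (hw' i))
      _ = (Ω + ∑ i, w' i) * (L_f * Δ) := by
          rw [← Finset.sum_mul, Finset.sum_add_distrib, hwsum]
      _ ≤ (Ω + Ω) * (L_f * Δ) := by
          refine mul_le_mul_of_nonneg_right (by linarith) (by positivity)
      _ = 2 * Ω * L_f * Δ := by ring
  -- residual energy
  have hr2 : ∑ i, r i ^ 2 ≤ E := by
    have h1 : (∑ m', ∑ i,
        (f k (μs m') i - ∑ n, (∑ j, f k (μs m') j * ζ n j) * ζ n i) ^ 2) ≤ E := by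
      refine le_trans (Finset.single_le_sum (f := fun k' => ∑ m', ∑ i,
        (f k' (μs m') i - ∑ n, (∑ j, f k' (μs m') j * ζ n j) * ζ n i) ^ 2)
        (fun k' _ => by positivity) (Finset.mem_univ k)) htail
    exact le_trans (Finset.single_le_sum (f := fun m' => ∑ i,
        (f k (μs m') i - ∑ n, (∑ j, f k (μs m') j * ζ n j) * ζ n i) ^ 2)
        (fun m' _ => by positivity) (Finset.mem_univ m)) h1
  -- Cauchy-Schwarz helper
  have cs : ∀ v : Fin N → ℝ, (∀ i, 0 ≤ v i) →
      |∑ i, v i * r i| ≤ Real.sqrt (∑ i, v i ^ 2) * Real.sqrt E := by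
    intro v hv
    have h := Finset.sum_mul_sq_le_sq_mul_sq Finset.univ v r
    have h2 : |∑ i, v i * r i| ≤ Real.sqrt (∑ i, v i ^ 2) * Real.sqrt (∑ i, r i ^ 2) := by
      have := Real.sqrt_le_sqrt h
      rwa [Real.sqrt_sq_eq_abs, Real.sqrt_mul (by positivity)] at this
    exact h2.trans (mul_le_mul_of_nonneg_left (Real.sqrt_le_sqrt hr2) (Real.sqrt_nonneg _))
  have hB : |∑ i, (w i - w' i) * r i| ≤
      (Real.sqrt (∑ i, w i ^ 2) + Real.sqrt (∑ i, w' i ^ 2)) * Real.sqrt E := by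
    have hsplit : ∑ i, (w i - w' i) * r i = (∑ i, w i * r i) - ∑ i, w' i * r i := by
      rw [← Finset.sum_sub_distrib]
      exact Finset.sum_congr rfl fun i _ => by ring
    rw [hsplit]
    calc |(∑ i, w i * r i) - ∑ i, w' i * r i|
        ≤ |∑ i, w i * r i| + |∑ i, w' i * r i| := abs_sub _ _
      _ ≤ Real.sqrt (∑ i, w i ^ 2) * Real.sqrt E
          + Real.sqrt (∑ i, w' i ^ 2) * Real.sqrt E :=
          add_le_add (cs w hw) (cs w' hw')
      _ = (Real.sqrt (∑ i, w i ^ 2) + Real.sqrt (∑ i, w' i ^ 2)) * Real.sqrt E := by ring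
  -- C: mode term
  have hC : |∑ n, c n * (∑ i, (w i - w' i) * ζ n i)| ≤ ε₁ * S_f := by
    calc |∑ n, c n * (∑ i, (w i - w' i) * ζ n i)|
        ≤ ∑ n, |c n * (∑ i, (w i - w' i) * ζ n i)| := Finset.abs_sum_le_sum_abs _ _
      _ = ∑ n, |c n| * |∑ i, (w i - w' i) * ζ n i| := by simp [abs_mul]
      _ ≤ ∑ n, |c n| * ε₁ :=
          Finset.sum_le_sum fun n _ =>
            mul_le_mul_of_nonneg_left (hconstr n) (abs_nonneg _)
      _ = (∑ n, |c n|) * ε₁ := by rw [Finset.sum_mul]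
      _ ≤ S_f * ε₁ := mul_le_mul_of_nonneg_right (hSf k m) hε₁
      _ = ε₁ * S_f := by ring
  rw [hdecomp]
  calc |_ + _ + _| ≤ |(∑ i, (w i - w' i) * (f k μ i - φ i))
      + (∑ i, (w i - w' i) * r i)| + |∑ n, c n * (∑ i, (w i - w' i) * ζ n i)| :=
        abs_add_le _ _
    _ ≤ |∑ i, (w i - w' i) * (f k μ i - φ i)| + |∑ i, (w i - w' i) * r i|
        + |∑ n, c n * (∑ i, (w i - w' i) * ζ n i)| := by
        have := abs_add_le (∑ i, (w i - w' i) * (f k μ i - φ i)) (∑ i, (w i - w' i) * r i)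
        linarith
    _ ≤ _ := by linarith
end
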